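/- Let J be a poset ideal in Hom(P,[n]) with ∅ ≠ J ⊊ Hom(P,[n]). Then there exist isotone maps φ ∈ J and ψ ∈ Hom(P,[n]) \ J that differ at exactly one element: there is p ∈ P with ψ(p) > φ(p) and ψ(q) = φ(q) for all q ≠ p. -/

import Mathlib

variable {P : Type*} [PartialOrder P] [Fintype P]

/-- Let J be a poset ideal in Hom(P,[n]) with ∅ ≠ J ⊊ Hom(P,[n]).  Then there are isotone
maps φ ∈ J and ψ ∉ J differing at exactly one element: ψ(p) > φ(p) and ψ(q) = φ(q) for
q ≠ p. -/
theorem stmt16 [Nonempty P] {n : ℕ} (J : Set (P → Fin n))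
    (hJ1 : ∀ φ ∈ J, Monotone φ)
    (hJ2 : ∀ φ ∈ J, ∀ ψ : P → Fin n, Monotone ψ → ψ ≤ φ → ψ ∈ J)
    (hJne : J.Nonempty)
    (hproper : ∃ ψ : P → Fin n, Monotone ψ ∧ ψ ∉ J) :
    ∃ φ ∈ J, ∃ ψ : P → Fin n, Monotone ψ ∧ ψ ∉ J ∧
      ∃ p : P, φ p < ψ p ∧ ∀ q : P, q ≠ p → φ q = ψ q := by
  classical
  obtain ⟨ψ0, hψ0m, hψ0J⟩ := hproper
  set Pred : ℕ → Prop := fun s => ∃ ψ : P → Fin n, Monotone ψ ∧ ψ ∉ J ∧ ∑ p, (ψ p : ℕ) = s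
    with hPred
  have hex : ∃ s, Pred s := ⟨_, ψ0, hψ0m, hψ0J, rfl⟩
  obtain ⟨ψ, hψm, hψJ, hsum⟩ := Nat.find_spec hex
  -- ψ is nonzero somewhere
  have hS : ∃ p, 0 < (ψ p : ℕ) := by
    by_contra h
    push_neg at h
    obtain ⟨φ0, hφ0⟩ := hJne
    refine hψJ (hJ2 φ0 hφ0 ψ hψm (fun p => ?_))
    have := h p
    have : (ψ p : ℕ) = 0 := by omega
    simp [Fin.le_def, this]
  -- the set of points with positive value
  set S : Finset P := Finset.univ.filter (fun q => 0 < (ψ q : ℕ)) with hSdef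
  have hSne : S.Nonempty := by
    obtain ⟨p, hp⟩ := hS
    exact ⟨p, by simp [hSdef, hp]⟩
  set v : ℕ := (S.image fun q => (ψ q : ℕ)).min' (hSne.image _) with hv
  have hvmem : v ∈ S.image fun q => (ψ q : ℕ) := Finset.min'_mem _ _
  have hvpos : 0 < v := by
    obtain ⟨q, hq, hq'⟩ := Finset.mem_image.mp hvmem
    simp [hSdef] at hq
    omega
  have hvle : ∀ q, 0 < (ψ q : ℕ) → v ≤ (ψ q : ℕ) := by
    intro q hq
    exact Finset.min'_le _ _ (Finset.mem_image.mpr ⟨q, by simp [hSdef, hq], rfl⟩)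
  set T : Finset P := Finset.univ.filter (fun q => (ψ q : ℕ) = v) with hTdef
  have hTne : T.Nonempty := by
    obtain ⟨q, hq, hq'⟩ := Finset.mem_image.mp hvmem
    exact ⟨q, by simp [hTdef, hq']⟩
  obtain ⟨p, hpT, hpmin⟩ := T.exists_minimal hTne
  have hpv : (ψ p : ℕ) = v := by simpa [hTdef] using hpT
  -- key: for q < p, ψ q < ψ p
  have hkey : ∀ q, q < p → (ψ q : ℕ) < (ψ p : ℕ) := by
    intro q hq
    have hle : (ψ q : ℕ) ≤ (ψ p : ℕ) := hψm hq.le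
    rcases Nat.lt_or_ge 0 (ψ q : ℕ) with hpos | hz
    · have h1 : v ≤ (ψ q : ℕ) := hvle q hpos
      have h2 : (ψ q : ℕ) = v := le_antisymm (hpv ▸ hle) h1
      exact absurd (lt_of_lt_of_le hq (hpmin (by simp [hTdef, h2]) hq.le)) (lt_irrefl _)
    · omega
  have hplt : (ψ p : ℕ) - 1 < n := by
    have := (ψ p).isLt
    omega
  set φ : P → Fin n := fun q => if q = p then ⟨(ψ p : ℕ) - 1, hplt⟩ else ψ q with hφ
  have hφm : Monotone φ := by
    intro a b hab
    simp only [hφ, Fin.le_def]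
    by_cases ha : a = p <;> by_cases hb : b = p <;> simp [ha, hb]
    · have : (ψ p : ℕ) ≤ (ψ b : ℕ) := hψm (ha ▸ hab)
      omega
    · have hlt : a < p := lt_of_le_of_ne (hb ▸ hab) (fun h => ha h)
      have := hkey a hlt
      omega
    · exact hψm hab
  have hsumlt : ∑ q, (φ q : ℕ) < ∑ q, (ψ q : ℕ) := by
    apply Finset.sum_lt_sum
    · intro i _
      by_cases hi : i = p <;> simp [hφ, hi]
    · refine ⟨p, Finset.mem_univ p, ?_⟩
      simp [hφ]
      omega
  have hφJ : φ ∈ J := by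
    by_contra hφJ
    have : Pred (∑ q, (φ q : ℕ)) := ⟨φ, hφm, hφJ, rfl⟩
    exact Nat.find_min hex (by omega) this
  refine ⟨φ, hφJ, ψ, hψm, hψJ, p, ?_, ?_⟩
  · simp only [hφ, Fin.lt_def, if_pos rfl]
    omega
  · intro q hq
    simp [hφ, hq]
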